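/- Let G be a simple stochastic game, let T be an end component of G with t ∉ T, and let f : S → [0,1] satisfy f(s) ≥ V(s) for all s ∈ S. Then DEFLATE(T,f)(s) ≥ V(s) for all s ∈ S; that is, for every s ∈ T, min(f(s), exit^max_f(T)) ≥ V(s). -/

import Mathlib

/-- A simple stochastic game (SG): a finite set of states `S` partitioned into
Maximizer states (`isMax s = true`) and Minimizer states (`isMax s = false`),
a target state, a sink state, a finite set of actions `A`, a nonempty set of
available actions at each state, and a transition function assigning to each
state and available action a probability distribution over states; the target
and the sink each have exactly one available action, a self-loop with
probability 1. -/
structure SG (S A : Type) [Fintype S] [DecidableEq S] [Fintype A] [DecidableEq A] where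
  isMax : S → Bool
  target : S
  sink : S
  target_ne_sink : target ≠ sink
  Av : S → Finset A
  Av_nonempty : ∀ s, (Av s).Nonempty
  δ : S → A → S → ℝ
  δ_nonneg : ∀ s a s', 0 ≤ δ s a s'
  δ_sum : ∀ s, ∀ a ∈ Av s, ∑ s', δ s a s' = 1
  target_loop : ∃ a, Av target = {a} ∧ δ target a target = 1
  sink_loop : ∃ a, Av sink = {a} ∧ δ sink a sink = 1

namespace SG

variable {S A : Type} [Fintype S] [DecidableEq S] [Fintype A] [DecidableEq A]

/-- `f(s,a) := Σ_{s'} δ(s,a)(s') · f(s')`. -/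
noncomputable def fval (G : SG S A) (f : S → ℝ) (s : S) (a : A) : ℝ :=
  ∑ s', G.δ s a s' * f s'

/-- `f : S → [0,1]`. -/
def InUnit (f : S → ℝ) : Prop := ∀ s, 0 ≤ f s ∧ f s ≤ 1

/-- The right-hand side of the Bellman equations at a (non-target, non-sink)
state `s`, with available actions given by `Av'`:
`max_{a ∈ Av'(s)} f(s,a)` at Maximizer states and `min_{a ∈ Av'(s)} f(s,a)`
at Minimizer states. -/
noncomputable def bellmanOn (G : SG S A) (Av' : S → Finset A) (f : S → ℝ) (s : S) : ℝ :=
  if G.isMax s then sSup (G.fval f s '' ↑(Av' s)) else sInf (G.fval f s '' ↑(Av' s))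

/-- `f : S → [0,1]` is a solution of the Bellman equations of the game with
available actions restricted to `Av'`. -/
def IsSolutionOn (G : SG S A) (Av' : S → Finset A) (f : S → ℝ) : Prop :=
  InUnit f ∧ f G.target = 1 ∧ f G.sink = 0 ∧
    ∀ s, s ≠ G.target → s ≠ G.sink → f s = G.bellmanOn Av' f s

/-- `f` is a solution of the Bellman equations of `G`. -/
def IsSolution (G : SG S A) (f : S → ℝ) : Prop := G.IsSolutionOn G.Av f

/-- `V` is the least solution of the Bellman equations of the game with
available actions restricted to `Av'` (the value function of that game). -/
def IsLeastSolutionOn (G : SG S A) (Av' : S → Finset A) (V : S → ℝ) : Prop :=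
  G.IsSolutionOn Av' V ∧ ∀ f, G.IsSolutionOn Av' f → ∀ s, V s ≤ f s

/-- `V` is the value function of `G`: the least solution of the Bellman
equations, in the pointwise order. -/
def IsValue (G : SG S A) (V : S → ℝ) : Prop := G.IsLeastSolutionOn G.Av V

/-- `U` is the greatest solution of the Bellman equations of `G`, in the
pointwise order. -/
def IsGreatestSolution (G : SG S A) (U : S → ℝ) : Prop :=
  G.IsSolution U ∧ ∀ f, G.IsSolution f → ∀ s, f s ≤ U s

/-- `(s,a)` exits `T`: some successor with positive probability is outside `T`. -/
def Exits (G : SG S A) (T : Finset S) (s : S) (a : A) : Prop :=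
  ∃ s', s' ∉ T ∧ 0 < G.δ s a s'

/-- `exit^max_f(T)`: the maximum of `f(s,a)` over Maximizer states `s ∈ T`
and available actions `a` with `(s,a)` exiting `T` (max ∅ = 0). -/
noncomputable def exitMax (G : SG S A) (f : S → ℝ) (T : Finset S) : ℝ :=
  sSup (insert (0:ℝ)
    {x : ℝ | ∃ s ∈ T, G.isMax s = true ∧ ∃ a ∈ G.Av s, G.Exits T s a ∧ x = G.fval f s a})

/-- `exit^min_f(T)`: the minimum of `f(s,a)` over Minimizer states `s ∈ T`
and available actions `a` with `(s,a)` exiting `T` (min ∅ = 1). -/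
noncomputable def exitMin (G : SG S A) (f : S → ℝ) (T : Finset S) : ℝ :=
  sInf (insert (1:ℝ)
    {x : ℝ | ∃ s ∈ T, G.isMax s = false ∧ ∃ a ∈ G.Av s, G.Exits T s a ∧ x = G.fval f s a})

/-- `T` is an end component of the game with available actions restricted to
`Av'`: `T` is nonempty and there is a nonempty set `B` of actions, each
available at some state of `T`, such that (1) every `a ∈ B ∩ Av'(s)` for
`s ∈ T` stays in `T`, and (2) every state of `T` can reach every other state
of `T` by a finite path staying in `T` and using only actions of `B`. -/
def IsECOn (G : SG S A) (Av' : S → Finset A) (T : Finset S) : Prop :=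
  T.Nonempty ∧ ∃ B : Finset A, B.Nonempty ∧
    (∀ a ∈ B, ∃ s ∈ T, a ∈ Av' s) ∧
    (∀ s ∈ T, ∀ a ∈ B ∩ Av' s, ∀ s', 0 < G.δ s a s' → s' ∈ T) ∧
    (∀ s ∈ T, ∀ s' ∈ T, Relation.ReflTransGen
      (fun x y => x ∈ T ∧ ∃ a ∈ B ∩ Av' x, 0 < G.δ x a y) s s')

/-- `T` is an end component (EC) of `G`. -/
def IsEC (G : SG S A) (T : Finset S) : Prop := G.IsECOn G.Av T

/-- `T` is a maximal end component (MEC) of the game with available actions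
restricted to `Av'`. -/
def IsMECOn (G : SG S A) (Av' : S → Finset A) (T : Finset S) : Prop :=
  G.IsECOn Av' T ∧ ∀ T', G.IsECOn Av' T' → T ⊆ T' → T = T'

/-- `T` is a maximal end component (MEC) of `G`. -/
def IsMEC (G : SG S A) (T : Finset S) : Prop := G.IsMECOn G.Av T

/-- The available actions of the game obtained from `G` by removing, at every
Minimizer state `s`, each action `a ∈ Av(s)` with `f(s,a) > f(s)`. -/
noncomputable def restrictAv (G : SG S A) (f : S → ℝ) (s : S) : Finset A :=
  if G.isMax s then G.Av s
  else (G.Av s).filter (fun a => ¬ f s < G.fval f s a)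

/-- `T` is a simple end component (SEC) of `G`, with respect to the value
function `V`: an EC with `V(s) = exit^max_V(T)` for all `s ∈ T`. -/
def IsSEC (G : SG S A) (V : S → ℝ) (T : Finset S) : Prop :=
  G.IsEC T ∧ ∀ s ∈ T, V s = G.exitMax V T

/-- `T` is a maximal simple end component (MSEC) of `G` with respect to `V`. -/
def IsMSEC (G : SG S A) (V : S → ℝ) (T : Finset S) : Prop :=
  G.IsSEC V T ∧ ∀ T', G.IsSEC V T' → T ⊆ T' → T = T'

/-- `DEFLATE(T,f)`: equal to `min(f(s), exit^max_f(T))` on `T` and to `f`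
outside `T`. -/
noncomputable def deflate (G : SG S A) (T : Finset S) (f : S → ℝ) (s : S) : ℝ :=
  if s ∈ T then min (f s) (G.exitMax f T) else f s

/-- The Bellman update: `1` at the target, `0` at the sink, and the Bellman
right-hand side elsewhere. -/
noncomputable def bellmanUpdate (G : SG S A) (f : S → ℝ) : S → ℝ :=
  fun s => if s = G.target then 1 else if s = G.sink then 0 else G.bellmanOn G.Av f s

/-- The lower sequence `L_n` of bounded value iteration: `L_0` is `0`
everywhere except `L_0(target) = 1`, and `L_{n+1}` is the Bellman update
of `L_n`. -/
noncomputable def Lseq (G : SG S A) : ℕ → S → ℝ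
  | 0 => fun s => if s = G.target then 1 else 0
  | n + 1 => G.bellmanUpdate (G.Lseq n)

end SG

namespace SG

variable {S A : Type} [Fintype S] [DecidableEq S] [Fintype A] [DecidableEq A]

lemma fval_nonneg' (G : SG S A) {f : S → ℝ} (hf : ∀ s, 0 ≤ f s) (s : S) (a : A) :
    0 ≤ G.fval f s a :=
  Finset.sum_nonneg fun s' _ => mul_nonneg (G.δ_nonneg s a s') (hf s')

lemma fval_mono' (G : SG S A) {f g : S → ℝ} (h : ∀ s, f s ≤ g s) (s : S) (a : A) :
    G.fval f s a ≤ G.fval g s a :=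
  Finset.sum_le_sum fun s' _ => mul_le_mul_of_nonneg_left (h s') (G.δ_nonneg s a s')

lemma fval_le_of_stay (G : SG S A) {f : S → ℝ} {c : ℝ} {T : Finset S} {s : S} {a : A}
    (ha : a ∈ G.Av s) (hex : ¬ G.Exits T s a) (hf : ∀ s' ∈ T, f s' ≤ c) :
    G.fval f s a ≤ c := by
  have hδ : ∀ s', s' ∉ T → G.δ s a s' = 0 := by
    intro s' hs'
    by_contra h
    exact hex ⟨s', hs', lt_of_le_of_ne (G.δ_nonneg s a s') (Ne.symm h)⟩
  calc G.fval f s a ≤ ∑ s', G.δ s a s' * c := by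
        apply Finset.sum_le_sum
        intro s' _
        by_cases hs' : s' ∈ T
        · exact mul_le_mul_of_nonneg_left (hf s' hs') (G.δ_nonneg s a s')
        · simp [hδ s' hs']
    _ = c := by rw [← Finset.sum_mul, G.δ_sum s a ha, one_mul]

lemma fval_le_const (G : SG S A) {f : S → ℝ} {c : ℝ} {s : S} {a : A}
    (ha : a ∈ G.Av s) (hf : ∀ s', f s' ≤ c) : G.fval f s a ≤ c :=
  G.fval_le_of_stay (T := Finset.univ) ha
    (fun ⟨s', hs', _⟩ => hs' (Finset.mem_univ s')) (fun s' _ => hf s')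

lemma image_nonempty' (G : SG S A) (f : S → ℝ) (s : S) :
    (G.fval f s '' ↑(G.Av s)).Nonempty := by
  obtain ⟨a, ha⟩ := G.Av_nonempty s
  exact ⟨G.fval f s a, Set.mem_image_of_mem _ (Finset.mem_coe.2 ha)⟩

lemma bddAbove_image' (G : SG S A) {f : S → ℝ} {c : ℝ} (hf : ∀ s', f s' ≤ c) (s : S) :
    BddAbove (G.fval f s '' ↑(G.Av s)) := by
  refine ⟨c, ?_⟩
  rintro x ⟨a, ha, rfl⟩
  exact G.fval_le_const (Finset.mem_coe.1 ha) hf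

lemma bddBelow_image' (G : SG S A) {f : S → ℝ} (hf : ∀ s', 0 ≤ f s') (s : S) :
    BddBelow (G.fval f s '' ↑(G.Av s)) := by
  refine ⟨0, ?_⟩
  rintro x ⟨a, ha, rfl⟩
  exact G.fval_nonneg' hf s a

lemma bellmanOn_unit (G : SG S A) {f : S → ℝ} (hf : InUnit f) (s : S) :
    0 ≤ G.bellmanOn G.Av f s ∧ G.bellmanOn G.Av f s ≤ 1 := by
  obtain ⟨a, ha⟩ := G.Av_nonempty s
  have hmem : G.fval f s a ∈ G.fval f s '' ↑(G.Av s) :=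
    Set.mem_image_of_mem _ (Finset.mem_coe.2 ha)
  have h0 : 0 ≤ G.fval f s a := G.fval_nonneg' (fun x => (hf x).1) s a
  have h1 : G.fval f s a ≤ 1 := G.fval_le_const ha (fun x => (hf x).2)
  unfold bellmanOn
  split
  · constructor
    · exact h0.trans (le_csSup (G.bddAbove_image' (fun x => (hf x).2) s) hmem)
    · apply csSup_le (G.image_nonempty' f s)
      rintro x ⟨b, hb, rfl⟩
      exact G.fval_le_const (Finset.mem_coe.1 hb) (fun x => (hf x).2)
  · constructor
    · apply le_csInf (G.image_nonempty' f s)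
      rintro x ⟨b, hb, rfl⟩
      exact G.fval_nonneg' (fun x => (hf x).1) s b
    · exact (csInf_le (G.bddBelow_image' (fun x => (hf x).1) s) hmem).trans h1

lemma bellmanOn_mono (G : SG S A) {f g : S → ℝ} (hf0 : ∀ s, 0 ≤ f s)
    (hfg : ∀ s, f s ≤ g s) (hg1 : ∀ s, g s ≤ 1) (s : S) :
    G.bellmanOn G.Av f s ≤ G.bellmanOn G.Av g s := by
  unfold bellmanOn
  split
  · apply csSup_le (G.image_nonempty' f s)
    rintro x ⟨a, ha, rfl⟩
    exact (G.fval_mono' hfg s a).trans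
      (le_csSup (G.bddAbove_image' hg1 s) (Set.mem_image_of_mem _ ha))
  · apply le_csInf (G.image_nonempty' g s)
    rintro x ⟨a, ha, rfl⟩
    exact (csInf_le (G.bddBelow_image' hf0 s) (Set.mem_image_of_mem _ ha)).trans
      (G.fval_mono' hfg s a)

lemma bellmanUpdate_unit (G : SG S A) {f : S → ℝ} (hf : InUnit f) (s : S) :
    0 ≤ G.bellmanUpdate f s ∧ G.bellmanUpdate f s ≤ 1 := by
  unfold bellmanUpdate
  split
  · norm_num
  · split
    · norm_num
    · exact G.bellmanOn_unit hf s

lemma bellmanUpdate_mono (G : SG S A) {f g : S → ℝ} (hf0 : ∀ s, 0 ≤ f s)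
    (hfg : ∀ s, f s ≤ g s) (hg1 : ∀ s, g s ≤ 1) (s : S) :
    G.bellmanUpdate f s ≤ G.bellmanUpdate g s := by
  unfold bellmanUpdate
  split
  · exact le_refl 1
  · split
    · exact le_refl 0
    · exact G.bellmanOn_mono hf0 hfg hg1 s

lemma isSolution_of_fixpoint (G : SG S A) {f : S → ℝ} (hf : InUnit f)
    (hfix : G.bellmanUpdate f = f) : G.IsSolution f := by
  refine ⟨hf, ?_, ?_, ?_⟩
  · have := congrFun hfix G.target
    rw [← this]
    simp [bellmanUpdate]
  · have := congrFun hfix G.sink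
    rw [← this]
    simp [bellmanUpdate, G.target_ne_sink.symm]
  · intro s hst hsk
    have := congrFun hfix s
    rw [← this]
    simp [bellmanUpdate, hst, hsk]

lemma exists_fixpoint_le (G : SG S A) {g : S → ℝ} (hg : InUnit g)
    (hpre : ∀ s, G.bellmanUpdate g s ≤ g s) :
    ∃ h : S → ℝ, InUnit h ∧ G.bellmanUpdate h = h ∧ ∀ s, h s ≤ g s := by
  haveI : Fact ((0:ℝ) ≤ 1) := ⟨zero_le_one⟩
  have hmem : ∀ F : S → Set.Icc (0:ℝ) 1, ∀ s,
      G.bellmanUpdate (fun x => (F x : ℝ)) s ∈ Set.Icc (0:ℝ) 1 := by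
    intro F s
    have := G.bellmanUpdate_unit (f := fun x => (F x : ℝ))
      (fun x => (Set.mem_Icc.1 (F x).2)) s
    exact Set.mem_Icc.2 this
  let Φ : (S → Set.Icc (0:ℝ) 1) →o (S → Set.Icc (0:ℝ) 1) :=
    ⟨fun F s => ⟨G.bellmanUpdate (fun x => (F x : ℝ)) s, hmem F s⟩, by
      intro F F' hFF' s
      rw [Subtype.mk_le_mk]
      exact G.bellmanUpdate_mono (fun x => (Set.mem_Icc.1 (F x).2).1)
        (fun x => Subtype.coe_le_coe.2 (hFF' x))
        (fun x => (Set.mem_Icc.1 (F' x).2).2) s⟩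
  set H := OrderHom.lfp Φ with hH
  have hfix : Φ H = H := OrderHom.map_lfp Φ
  refine ⟨fun s => (H s : ℝ), fun s => Set.mem_Icc.1 (H s).2, ?_, ?_⟩
  · funext s
    exact congrArg Subtype.val (congrFun hfix s)
  · have hle : H ≤ fun s => (⟨g s, Set.mem_Icc.2 (hg s)⟩ : Set.Icc (0:ℝ) 1) := by
      apply OrderHom.lfp_le Φ
      intro s
      rw [Subtype.mk_le_mk]
      exact hpre s
    exact fun s => Subtype.coe_le_coe.2 (hle s)

lemma exists_stay_action (G : SG S A) {T : Finset S} (hT : G.IsEC T) {s : S} (hs : s ∈ T) :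
    ∃ a ∈ G.Av s, ∀ s', 0 < G.δ s a s' → s' ∈ T := by
  obtain ⟨Tne, B, Bne, hBav, hstay, hconn⟩ := hT
  by_cases hall : ∀ s' ∈ T, s' = s
  · obtain ⟨a, haB⟩ := Bne
    obtain ⟨s'', hs'', ha''⟩ := hBav a haB
    have heq := hall s'' hs''
    subst heq
    exact ⟨a, ha'', hstay _ hs a (Finset.mem_inter.2 ⟨haB, ha''⟩)⟩
  · push_neg at hall
    obtain ⟨s', hs', hne⟩ := hall
    have hpath := hconn s hs s' hs'
    rcases Relation.ReflTransGen.cases_head hpath with heq | ⟨c, ⟨_, a, haB, _⟩, _⟩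
    · exact absurd heq.symm hne
    · exact ⟨a, (Finset.mem_inter.1 haB).2, hstay s hs a haB⟩

lemma bddAbove_exitSet (G : SG S A) {f : S → ℝ} (hf1 : ∀ s', f s' ≤ 1) (T : Finset S) :
    BddAbove (insert (0:ℝ)
      {x : ℝ | ∃ s ∈ T, G.isMax s = true ∧ ∃ a ∈ G.Av s, G.Exits T s a ∧ x = G.fval f s a}) := by
  refine ⟨1, ?_⟩
  rintro x (rfl | ⟨s, _, _, a, ha, _, rfl⟩)
  · exact zero_le_one
  · exact G.fval_le_const ha hf1

lemma exitMax_nonneg (G : SG S A) {f : S → ℝ} (hf1 : ∀ s', f s' ≤ 1) (T : Finset S) :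
    0 ≤ G.exitMax f T :=
  le_csSup (G.bddAbove_exitSet hf1 T) (Set.mem_insert _ _)

lemma le_exitMax (G : SG S A) {f : S → ℝ} (hf1 : ∀ s', f s' ≤ 1) {T : Finset S} {s : S}
    (hs : s ∈ T) (hmax : G.isMax s = true) {a : A} (ha : a ∈ G.Av s)
    (hex : G.Exits T s a) : G.fval f s a ≤ G.exitMax f T :=
  le_csSup (G.bddAbove_exitSet hf1 T) (Set.mem_insert_iff.2 (Or.inr ⟨s, hs, hmax, a, ha, hex, rfl⟩))

lemma exitMax_mono (G : SG S A) {f g : S → ℝ} (hfg : ∀ s, f s ≤ g s)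
    (hg1 : ∀ s', g s' ≤ 1) (T : Finset S) : G.exitMax f T ≤ G.exitMax g T := by
  apply csSup_le (Set.insert_nonempty _ _)
  rintro x (rfl | ⟨s, hs, hmax, a, ha, hex, rfl⟩)
  · exact G.exitMax_nonneg hg1 T
  · exact (G.fval_mono' hfg s a).trans (G.le_exitMax hg1 hs hmax ha hex)

lemma value_le_exitMax (G : SG S A) {V : S → ℝ} (hV : G.IsValue V)
    {T : Finset S} (hT : G.IsEC T) (ht : G.target ∉ T) {s : S} (hs : s ∈ T) :
    V s ≤ G.exitMax V T := by
  obtain ⟨⟨hVU, hVt, hVz, hVbell⟩, hleast⟩ := hV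
  set e := G.exitMax V T with he
  have he0 : 0 ≤ e := G.exitMax_nonneg (fun x => (hVU x).2) T
  set g := G.deflate T V with hgdef
  have hgT : ∀ x ∈ T, g x = min (V x) e := by
    intro x hx; simp [hgdef, deflate, hx, he]
  have hgO : ∀ x, x ∉ T → g x = V x := by
    intro x hx; simp [hgdef, deflate, hx]
  have hgV : ∀ x, g x ≤ V x := by
    intro x
    by_cases hx : x ∈ T
    · rw [hgT x hx]; exact min_le_left _ _
    · rw [hgO x hx]
  have hg0 : ∀ x, 0 ≤ g x := by
    intro x
    by_cases hx : x ∈ T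
    · rw [hgT x hx]; exact le_min (hVU x).1 he0
    · rw [hgO x hx]; exact (hVU x).1
  have hgU : InUnit g := fun x => ⟨hg0 x, (hgV x).trans (hVU x).2⟩
  have hgle : ∀ x ∈ T, g x ≤ e := by
    intro x hx; rw [hgT x hx]; exact min_le_right _ _
  have hpre : ∀ x, G.bellmanUpdate g x ≤ g x := by
    intro x
    unfold bellmanUpdate
    by_cases hxt : x = G.target
    · subst hxt
      rw [if_pos rfl, hgO _ ht, hVt]
    · rw [if_neg hxt]
      by_cases hxz : x = G.sink
      · rw [if_pos hxz]; exact hg0 x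
      · rw [if_neg hxz]
        have h1 : G.bellmanOn G.Av g x ≤ V x := by
          calc G.bellmanOn G.Av g x ≤ G.bellmanOn G.Av V x :=
                G.bellmanOn_mono hg0 hgV (fun y => (hVU y).2) x
            _ = V x := (hVbell x hxt hxz).symm
        by_cases hxT : x ∈ T
        · have h2 : G.bellmanOn G.Av g x ≤ e := by
            unfold bellmanOn
            cases hmax : G.isMax x with
            | true =>
              rw [if_pos rfl]
              apply csSup_le (G.image_nonempty' g x)
              rintro y ⟨a, ha, rfl⟩
              by_cases hex : G.Exits T x a
              · exact (G.fval_mono' hgV x a).trans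
                  (G.le_exitMax (fun y => (hVU y).2) hxT hmax (Finset.mem_coe.1 ha) hex)
              · exact G.fval_le_of_stay (Finset.mem_coe.1 ha) hex hgle
            | false =>
              rw [if_neg Bool.false_ne_true]
              obtain ⟨b, hb, hbstay⟩ := G.exists_stay_action hT hxT
              have hnex : ¬ G.Exits T x b := by
                rintro ⟨s', hs', hδ⟩
                exact hs' (hbstay s' hδ)
              have : G.fval g x b ≤ e := G.fval_le_of_stay hb hnex hgle
              exact (csInf_le (G.bddBelow_image' hg0 x)
                (Set.mem_image_of_mem _ (Finset.mem_coe.2 hb))).trans this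
          rw [hgT x hxT]
          exact le_min h1 h2
        · rw [hgO x hxT]
          exact h1
  obtain ⟨h, hhU, hhfix, hhg⟩ := G.exists_fixpoint_le hgU hpre
  have hhsol : G.IsSolution h := G.isSolution_of_fixpoint hhU hhfix
  have hVh : V s ≤ h s := hleast h hhsol s
  have : V s ≤ g s := hVh.trans (hhg s)
  rw [hgT s hs] at this
  exact this.trans (min_le_right _ _)

end SG

/-- **Lemma 3, DEFLATE is sound.** Let `T` be an EC with
`t ∉ T` and `f : S → [0,1]` with `f ≥ V` pointwise. Then
`DEFLATE(T,f) ≥ V` pointwise; that is, for every `s ∈ T`,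
`min(f(s), exit^max_f(T)) ≥ V(s)`. -/
theorem stmt5 {S A : Type} [Fintype S] [DecidableEq S] [Fintype A] [DecidableEq A]
    (G : SG S A) (V : S → ℝ) (hV : G.IsValue V)
    (T : Finset S) (hT : G.IsEC T) (ht : G.target ∉ T)
    (f : S → ℝ) (hf01 : SG.InUnit f) (hfV : ∀ s, V s ≤ f s) :
    (∀ s, V s ≤ G.deflate T f s) ∧
      ∀ s ∈ T, V s ≤ min (f s) (G.exitMax f T) := by
  have key : ∀ s ∈ T, V s ≤ G.exitMax f T := by
    intro s hs
    have h1 : V s ≤ G.exitMax V T := G.value_le_exitMax hV hT ht hs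
    have h2 : G.exitMax V T ≤ G.exitMax f T :=
      G.exitMax_mono hfV (fun s' => (hf01 s').2) T
    exact h1.trans h2
  constructor
  · intro s
    unfold SG.deflate
    by_cases hs : s ∈ T
    · rw [if_pos hs]
      exact le_min (hfV s) (key s hs)
    · rw [if_neg hs]
      exact hfV s
  · intro s hs
    exact le_min (hfV s) (key s hs)
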